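/- There exist constants c > 0 and T₀ > 0 such that the following holds. For α, β with |α| ≤ 1 and |β − π| < 1, let x(t; T, α, β) be the unique Pendulum-Lemma solution of ẍ + sin x = 0 with x(0) = α, x(T) = β, confined to [α, max(β, π)]. Then for all T ≥ T₀: |∂_T ẋ(0; T, α, β)| ≤ e^{−cT}. (This is the non-winding case |β − α| < 2π: the time-T preimage of the line {x = β} under the pendulum flow converges exponentially to the unstable manifold y = U(x) of the saddle (π, 0), and its motion is exponentially slow.) -/

import Mathlib

open Set Filter Real

/-! ### Generic one-sided derivative helpers -/

lemma slope_tendsto_right {f : ℝ → ℝ} {d a : ℝ} (hf : HasDerivAt f d a) :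
    Tendsto (slope f a) (nhdsWithin a (Ioi a)) (nhds d) := by
  have h1 : HasDerivWithinAt f d (Ioi a) a := hf.hasDerivWithinAt
  rwa [hasDerivWithinAt_iff_tendsto_slope' (by simp : a ∉ Ioi a)] at h1

lemma deriv_nonneg_of_right {f : ℝ → ℝ} {d a : ℝ} (hf : HasDerivAt f d a)
    (h : ∀ᶠ t in nhdsWithin a (Ioi a), f a ≤ f t) : 0 ≤ d := by
  refine ge_of_tendsto (slope_tendsto_right hf) ?_
  filter_upwards [h, self_mem_nhdsWithin] with t ht ht'
  rw [slope_def_field]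
  have : (0:ℝ) < t - a := by simp only [mem_Ioi] at ht'; linarith
  exact div_nonneg (by linarith) this.le

lemma deriv_nonpos_of_right {f : ℝ → ℝ} {d a : ℝ} (hf : HasDerivAt f d a)
    (h : ∀ᶠ t in nhdsWithin a (Ioi a), f t ≤ f a) : d ≤ 0 := by
  refine le_of_tendsto (slope_tendsto_right hf) ?_
  filter_upwards [h, self_mem_nhdsWithin] with t ht ht'
  rw [slope_def_field]
  have : (0:ℝ) < t - a := by simp only [mem_Ioi] at ht'; linarith
  exact div_nonpos_of_nonpos_of_nonneg (by linarith) this.le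

lemma eventually_lt_of_deriv_neg_right {f : ℝ → ℝ} {d a : ℝ} (hf : HasDerivAt f d a)
    (hd : d < 0) : ∀ᶠ t in nhdsWithin a (Ioi a), f t < f a := by
  have h := (tendsto_order.1 (slope_tendsto_right hf)).2 0 hd
  filter_upwards [h, self_mem_nhdsWithin] with t ht ht'
  rw [slope_def_field] at ht
  have hta : (0:ℝ) < t - a := by simp only [mem_Ioi] at ht'; linarith
  nlinarith [mul_neg_of_neg_of_pos ht hta, div_mul_cancel₀ (f t - f a) hta.ne']

/-! ### IVT sign-propagation -/

lemma stay_neg {v : ℝ → ℝ} {a b σ : ℝ} (hab : a ≤ b) (hσ : 0 < σ)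
    (hc : ContinuousOn v (Icc a b))
    (hne : ∀ t ∈ Icc a b, σ ≤ |v t|)
    (ha : v a ≤ 0) : ∀ t ∈ Icc a b, v t ≤ -σ := by
  have ha' : v a ≤ -σ := by
    have := hne a ⟨le_refl a, hab⟩
    rcases abs_cases (v a) with ⟨h1, _⟩ | ⟨h1, _⟩ <;> linarith
  intro t ht
  by_contra hcon
  push_neg at hcon
  have htσ : σ ≤ v t := by
    have := hne t ht
    rcases abs_cases (v t) with ⟨h1, _⟩ | ⟨h1, _⟩ <;> linarith
  have h0 : (0:ℝ) ∈ Icc (v a) (v t) := ⟨by linarith, by linarith⟩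
  obtain ⟨ζ, hζ, hζ0⟩ := intermediate_value_Icc ht.1 (hc.mono (Icc_subset_Icc le_rfl ht.2)) h0
  have := hne ζ ⟨hζ.1, le_trans hζ.2 ht.2⟩
  rw [hζ0] at this; simp at this; linarith

lemma stay_pos {v : ℝ → ℝ} {a b σ : ℝ} (hab : a ≤ b) (hσ : 0 < σ)
    (hc : ContinuousOn v (Icc a b))
    (hne : ∀ t ∈ Icc a b, σ ≤ |v t|)
    (ha : 0 ≤ v a) : ∀ t ∈ Icc a b, σ ≤ v t := by
  have h := stay_neg hab hσ (hc.neg) (by intro t ht; rw [abs_neg]; exact hne t ht)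
    (by simpa using ha) (v := fun t => -(v t))
  intro t ht
  have := h t ht
  simp only [neg_le_neg_iff] at this
  linarith [this]

/-! ### Monotonicity from derivatives on an interval -/

lemma mono_from_deriv {f f' : ℝ → ℝ} {a b : ℝ}
    (hf : ∀ t ∈ Icc a b, HasDerivAt f (f' t) t)
    (h0 : ∀ t ∈ Ioo a b, 0 ≤ f' t) : MonotoneOn f (Icc a b) := by
  apply monotoneOn_of_deriv_nonneg (convex_Icc a b)
  · exact fun t ht => (hf t ht).continuousAt.continuousWithinAt
  · rw [interior_Icc]
    exact fun t ht => ((hf t (Ioo_subset_Icc_self ht)).differentiableAt).differentiableWithinAt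
  · rw [interior_Icc]
    intro t ht
    rw [(hf t (Ioo_subset_Icc_self ht)).deriv]
    exact h0 t ht

lemma anti_from_deriv {f f' : ℝ → ℝ} {a b : ℝ}
    (hf : ∀ t ∈ Icc a b, HasDerivAt f (f' t) t)
    (h0 : ∀ t ∈ Ioo a b, f' t ≤ 0) : AntitoneOn f (Icc a b) := by
  apply antitoneOn_of_deriv_nonpos (convex_Icc a b)
  · exact fun t ht => (hf t ht).continuousAt.continuousWithinAt
  · rw [interior_Icc]
    exact fun t ht => ((hf t (Ioo_subset_Icc_self ht)).differentiableAt).differentiableWithinAt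
  · rw [interior_Icc]
    intro t ht
    rw [(hf t (Ioo_subset_Icc_self ht)).deriv]
    exact h0 t ht

/-! ### Trig numerics -/

lemma cos_one_ge : (1/2 : ℝ) ≤ Real.cos 1 := by
  have := Real.one_sub_sq_div_two_le_cos (x := 1)
  norm_num at this ⊢
  linarith

lemma cos_six_fifths_le : Real.cos (6/5) ≤ 101/250 := by
  have hs : (3/5 : ℝ) - (3/5)^3/4 < Real.sin (3/5) :=
    by have := Real.sin_gt_sub_cube (x := 3/5) (by norm_num); norm_num at this ⊢; linarith
  have hs1 : (273/500 : ℝ) < Real.sin (3/5) := by norm_num at hs ⊢; linarith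
  have hcos : Real.cos (6/5) = 1 - 2 * Real.sin (3/5)^2 := by
    have : (6/5 : ℝ) = 2 * (3/5) := by norm_num
    rw [this, Real.cos_two_mul']
    have := Real.sin_sq_add_cos_sq (3/5 : ℝ)
    linarith
  nlinarith

lemma cos_region {y : ℝ} (h1 : Real.pi - 6/5 ≤ y) (h2 : y ≤ Real.pi + 6/5) :
    Real.cos y ≤ -(7/25) := by
  have hc : Real.cos (y - Real.pi) = -Real.cos y := by
    rw [show y - Real.pi = -(Real.pi - y) by ring, Real.cos_neg, Real.cos_pi_sub]
  have hlb : 1 - (y - Real.pi)^2/2 ≤ Real.cos (y - Real.pi) :=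
    Real.one_sub_sq_div_two_le_cos
  nlinarith [sq_nonneg (y - Real.pi)]

lemma cos_lower_low {y : ℝ} (h1 : -1 ≤ y) (h2 : y ≤ Real.pi - 6/5) :
    -(101/250) ≤ Real.cos y := by
  have hpi : (3.141592 : ℝ) < Real.pi := Real.pi_gt_d6
  have h3 : |y| ≤ Real.pi - 6/5 := by
    rw [abs_le]; constructor <;> nlinarith
  have h4 : Real.cos (Real.pi - 6/5) ≤ Real.cos |y| := by
    apply Real.cos_le_cos_of_nonneg_of_le_pi (abs_nonneg y) (by nlinarith) h3
  rw [Real.cos_abs] at h4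
  rw [Real.cos_pi_sub] at h4
  have := cos_six_fifths_le
  linarith

lemma abs_cos_sub_cos_le (a b : ℝ) : |Real.cos a - Real.cos b| ≤ |a - b| := by
  rw [Real.cos_sub_cos]
  rw [abs_mul, abs_mul]
  have h1 : |Real.sin ((a-b)/2)| ≤ |(a-b)/2| := Real.abs_sin_le_abs
  have h2 : |Real.sin ((a+b)/2)| ≤ 1 := Real.abs_sin_le_one _
  have h3 : |(a-b)/2| = |a-b|/2 := by rw [abs_div]; norm_num
  calc |(-2:ℝ)| * |Real.sin ((a+b)/2)| * |Real.sin ((a-b)/2)|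
      ≤ 2 * 1 * (|a-b|/2) := by
        apply mul_le_mul _ (by rw [← h3]; exact h1) (abs_nonneg _) (by norm_num)
        rw [abs_neg, abs_two]
        nlinarith [abs_nonneg (Real.sin ((a+b)/2))]
    _ = |a - b| := by ring

lemma abs_sin_sub_sin_le (a b : ℝ) : |Real.sin a - Real.sin b| ≤ |a - b| := by
  rw [Real.sin_sub_sin]
  rw [abs_mul, abs_mul]
  have h1 : |Real.sin ((a-b)/2)| ≤ |(a-b)/2| := Real.abs_sin_le_abs
  have h2 : |Real.cos ((a+b)/2)| ≤ 1 := Real.abs_cos_le_one _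
  have h3 : |(a-b)/2| = |a-b|/2 := by rw [abs_div]; norm_num
  calc |(2:ℝ)| * |Real.sin ((a-b)/2)| * |Real.cos ((a+b)/2)|
      ≤ 2 * (|a-b|/2) * 1 := by
        apply mul_le_mul _ h2 (abs_nonneg _) (by positivity)
        apply mul_le_mul (by rw [abs_two]) (by rw [← h3]; exact h1) (abs_nonneg _) (by norm_num)
    _ = |a - b| := by ring

lemma sin_region_decay {a b : ℝ} (ha : a ∈ Icc (Real.pi - 6/5) (Real.pi + 6/5))
    (hb : b ∈ Icc (Real.pi - 6/5) (Real.pi + 6/5)) :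
    (Real.sin a - Real.sin b) * (a - b) ≤ -(7/25) * (a-b)^2 := by
  have key : ∀ u w : ℝ, u ∈ Icc (Real.pi - 6/5) (Real.pi + 6/5) →
      w ∈ Icc (Real.pi - 6/5) (Real.pi + 6/5) → u ≤ w →
      Real.sin w + (7/25) * w ≤ Real.sin u + (7/25) * u := by
    intro u w hu hw huw
    have hanti : AntitoneOn (fun y => Real.sin y + (7/25) * y)
        (Icc (Real.pi - 6/5) (Real.pi + 6/5)) := by
      apply anti_from_deriv (f' := fun y => Real.cos y + 7/25)
      · intro t _
        exact (Real.hasDerivAt_sin t).add ((hasDerivAt_id t).const_mul (7/25) |>.congr_deriv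
          (by ring))
      · intro t ht
        have := cos_region ht.1.le ht.2.le
        linarith
    exact hanti hu hw huw
  rcases le_total a b with h | h
  · have := key a b ha hb h
    nlinarith [sq_nonneg (a-b)]
  · have := key b a hb ha h
    nlinarith [sq_nonneg (a-b)]

/-! ### Per-orbit facts -/

structure Orbit (α β T : ℝ) (x v : ℝ → ℝ) : Prop where
  sol : ∀ t ∈ Icc (0:ℝ) T, HasDerivAt x (v t) t ∧ HasDerivAt v (-Real.sin (x t)) t
  x0 : x 0 = α
  xT : x T = β
  conf : ∀ t ∈ Icc (0:ℝ) T, α ≤ x t ∧ x t ≤ max β Real.pi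

namespace Orbit

variable {α β T : ℝ} {x v : ℝ → ℝ}

lemma hT0 (hT : 10 ≤ T) : (0:ℝ) < T := by linarith

lemma beta_lb (hβ : |β - Real.pi| < 1) : Real.pi - 1 < β := by
  rcases abs_lt.1 hβ with ⟨h1, _⟩; linarith

lemma beta_ub (hβ : |β - Real.pi| < 1) : β < Real.pi + 1 := by
  rcases abs_lt.1 hβ with ⟨_, h2⟩; linarith

lemma alpha_lb (hα : |α| ≤ 1) : -1 ≤ α := by rcases abs_le.1 hα with ⟨h1, _⟩; linarith

lemma alpha_ub (hα : |α| ≤ 1) : α ≤ 1 := by rcases abs_le.1 hα with ⟨_, h2⟩; linarith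

lemma x_ub (hβ : |β - Real.pi| < 1) (O : Orbit α β T x v) :
    ∀ t ∈ Icc (0:ℝ) T, x t ≤ Real.pi + 1 := by
  intro t ht
  have h := (O.conf t ht).2
  have : max β Real.pi ≤ Real.pi + 1 :=
    max_le (beta_ub hβ).le (by linarith [Real.pi_pos])
  linarith

lemma x_lb (hα : |α| ≤ 1) (O : Orbit α β T x v) :
    ∀ t ∈ Icc (0:ℝ) T, -1 ≤ x t := by
  intro t ht
  have h := (O.conf t ht).1
  linarith [alpha_lb hα]

lemma v0_nonneg (hT : 10 ≤ T) (O : Orbit α β T x v) : 0 ≤ v 0 := by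
  have h0 : (0:ℝ) ∈ Icc (0:ℝ) T := ⟨le_rfl, by linarith⟩
  apply deriv_nonneg_of_right (O.sol 0 h0).1
  filter_upwards [Ioc_mem_nhdsGT_of_mem (α := ℝ) ⟨le_rfl, hT0 hT⟩] with t ht
  have := (O.conf t ⟨ht.1.le, ht.2⟩).1
  rw [O.x0]; exact this

/-- energy conservation -/
lemma energy (hT : 10 ≤ T) (O : Orbit α β T x v) :
    ∀ t ∈ Icc (0:ℝ) T, v t ^ 2 / 2 - Real.cos (x t) = v 0 ^ 2 / 2 - Real.cos α := by
  have key : ∀ t ∈ Icc (0:ℝ) T,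
      (fun u => v u ^ 2 / 2 - Real.cos (x u)) t = (fun u => v u ^ 2 / 2 - Real.cos (x u)) 0 := by
    apply constant_of_has_deriv_right_zero
    · intro t ht
      exact (((O.sol t ht).2.pow 2).div_const 2).sub ((O.sol t ht).1.cos)
        |>.continuousAt.continuousWithinAt
    · intro t ht
      have ht' : t ∈ Icc (0:ℝ) T := ⟨ht.1, ht.2.le⟩
      have h1 := (O.sol t ht').1
      have h2 := (O.sol t ht').2
      have hd : HasDerivAt (fun u => v u ^ 2 / 2 - Real.cos (x u))
          ((↑2 * v t ^ (2-1) * (-Real.sin (x t))) / 2 - (-Real.sin (x t) * v t)) t :=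
        ((h2.pow 2).div_const 2).sub h1.cos
      have : (↑2 * v t ^ (2-1) * (-Real.sin (x t))) / 2 - (-Real.sin (x t) * v t) = 0 := by
        push_cast; ring
      rw [this] at hd
      exact hd.hasDerivWithinAt
  intro t ht
  have := key t ht
  simp only at this
  rw [this, O.x0]

lemma cos_alpha (hα : |α| ≤ 1) : (1/2:ℝ) ≤ Real.cos α := by
  have h1 : Real.cos 1 ≤ Real.cos |α| :=
    Real.cos_le_cos_of_nonneg_of_le_pi (abs_nonneg α)
      (by linarith [Real.pi_gt_three]) hα
  rw [Real.cos_abs] at h1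
  linarith [cos_one_ge]

lemma cos_beta (hβ : |β - Real.pi| < 1) : Real.cos β ≤ -(1/2) := by
  have h1 : Real.cos 1 ≤ Real.cos |β - Real.pi| :=
    Real.cos_le_cos_of_nonneg_of_le_pi (abs_nonneg _)
      (by linarith [Real.pi_gt_three]) hβ.le
  rw [Real.cos_abs] at h1
  have h2 : Real.cos (β - Real.pi) = -Real.cos β := by
    rw [show β - Real.pi = -(Real.pi - β) by ring, Real.cos_neg, Real.cos_pi_sub]
  rw [h2] at h1
  linarith [cos_one_ge]

/-- energy lower bound -/
lemma e_lb (hβ : |β - Real.pi| < 1) (hT : 10 ≤ T) (O : Orbit α β T x v) :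
    (1/2:ℝ) ≤ v 0 ^ 2 / 2 - Real.cos α := by
  have hTm : T ∈ Icc (0:ℝ) T := ⟨by linarith, le_rfl⟩
  have h := O.energy hT T hTm
  rw [O.xT] at h
  nlinarith [cos_beta hβ, sq_nonneg (v T)]

/-- energy upper bound -/
lemma e_ub (hα : |α| ≤ 1) (hβ : |β - Real.pi| < 1) (hT : 10 ≤ T) (O : Orbit α β T x v) :
    v 0 ^ 2 / 2 - Real.cos α ≤ 3/2 := by
  by_contra hcon
  push_neg at hcon
  -- then speed ≥ 1 everywhere, so β - α ≥ T ≥ 10, contradiction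
  have hsp : ∀ t ∈ Icc (0:ℝ) T, (1:ℝ) ≤ |v t| := by
    intro t ht
    have h := O.energy hT t ht
    have hc : Real.cos (x t) ≥ -1 := Real.neg_one_le_cos (x t)
    nlinarith [abs_nonneg (v t), sq_abs (v t)]
  have hvc : ContinuousOn v (Icc (0:ℝ) T) :=
    fun t ht => ((O.sol t ht).2).continuousAt.continuousWithinAt
  have hpos := stay_pos (by linarith : (0:ℝ) ≤ T) one_pos hvc hsp (O.v0_nonneg hT)
  -- x t - t is monotone
  have hmono : MonotoneOn (fun t => x t - t) (Icc (0:ℝ) T) := by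
    apply mono_from_deriv (f' := fun t => v t - 1)
    · intro t ht
      exact ((O.sol t ht).1.sub (hasDerivAt_id t))
    · intro t ht
      have := hpos t (Ioo_subset_Icc_self ht)
      linarith
  have h10 := hmono ⟨le_rfl, by linarith⟩ ⟨by linarith, le_rfl⟩ (by linarith)
  simp only [O.x0, O.xT] at h10
  have hβu := beta_ub hβ
  have hαl := alpha_lb hα
  have hpi : Real.pi < 3.15 := by linarith [Real.pi_lt_d2]
  linarith

lemma speed_sq (hα : |α| ≤ 1) (hβ : |β - Real.pi| < 1) (hT : 10 ≤ T) (O : Orbit α β T x v) :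
    ∀ t ∈ Icc (0:ℝ) T, v t ^ 2 ≤ 5 := by
  intro t ht
  have h := O.energy hT t ht
  have := O.e_ub hα hβ hT
  nlinarith [Real.cos_le_one (x t)]

lemma speed_abs (hα : |α| ≤ 1) (hβ : |β - Real.pi| < 1) (hT : 10 ≤ T) (O : Orbit α β T x v) :
    ∀ t ∈ Icc (0:ℝ) T, |v t| ≤ 9/4 := by
  intro t ht
  have := O.speed_sq hα hβ hT t ht
  nlinarith [abs_nonneg (v t), sq_abs (v t)]

lemma speed_low (hα : |α| ≤ 1) (hβ : |β - Real.pi| < 1) (hT : 10 ≤ T) (O : Orbit α β T x v) :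
    ∀ t ∈ Icc (0:ℝ) T, x t ≤ Real.pi - 6/5 → (43/100:ℝ) ≤ |v t| := by
  intro t ht hx
  have h := O.energy hT t ht
  have hcos := cos_lower_low (O.x_lb hα t ht) hx
  have := O.e_lb hβ hT
  nlinarith [abs_nonneg (v t), sq_abs (v t)]

lemma v0_lb (hα : |α| ≤ 1) (hβ : |β - Real.pi| < 1) (hT : 10 ≤ T) (O : Orbit α β T x v) :
    (7/5:ℝ) ≤ v 0 := by
  have h1 := O.e_lb hβ hT
  have h2 := cos_alpha (α := α) hα
  have h3 := O.v0_nonneg hT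
  nlinarith

end Orbit

namespace Orbit

variable {α β T : ℝ} {x v : ℝ → ℝ}

/-- If the orbit is at or below `π - 6/5` moving (weakly) downward, it can never
come back up to `β`: contradiction. -/
lemma descent (hα : |α| ≤ 1) (hβ : |β - Real.pi| < 1) (hT : 10 ≤ T) (O : Orbit α β T x v)
    {t₁ : ℝ} (ht₁ : t₁ ∈ Icc (0:ℝ) T) (hx1 : x t₁ ≤ Real.pi - 6/5) (hv1 : v t₁ ≤ 0) :
    False := by
  classical
  set C : Set ℝ := {u | u ∈ Icc t₁ T ∧ ∀ τ ∈ Icc t₁ u, x τ ≤ x t₁} with hC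
  have ht₁C : t₁ ∈ C := ⟨⟨le_rfl, ht₁.2⟩, by
    intro τ hτ
    have : τ = t₁ := le_antisymm hτ.2 hτ.1
    rw [this]⟩
  have hCne : C.Nonempty := ⟨t₁, ht₁C⟩
  have hCbdd : BddAbove C := ⟨T, fun u hu => hu.1.2⟩
  set u₀ := sSup C with hu₀
  have hu₀1 : t₁ ≤ u₀ := le_csSup hCbdd ht₁C
  have hu₀2 : u₀ ≤ T := csSup_le hCne (fun u hu => hu.1.2)
  have hu₀Icc : u₀ ∈ Icc (0:ℝ) T := ⟨le_trans ht₁.1 hu₀1, hu₀2⟩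
  have hkey : ∀ τ, t₁ ≤ τ → τ < u₀ → x τ ≤ x t₁ := by
    intro τ hτ1 hτ2
    obtain ⟨u, huC, hτu⟩ := exists_lt_of_lt_csSup hCne hτ2
    exact huC.2 τ ⟨hτ1, hτu.le⟩
  have hxle : ∀ τ ∈ Icc t₁ u₀, x τ ≤ x t₁ := by
    intro τ hτ
    rcases lt_or_eq_of_le hτ.2 with h | h
    · exact hkey τ hτ.1 h
    · rw [h]
      rcases eq_or_lt_of_le hu₀1 with h' | h'
      · rw [← h']
      · -- continuity from the left
        have hcont : ContinuousWithinAt x (Iio u₀) u₀ :=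
          ((O.sol u₀ hu₀Icc).1.continuousAt).continuousWithinAt
        haveI hNB : (nhdsWithin u₀ (Iio u₀)).NeBot := nhdsLT_neBot u₀
        refine le_of_tendsto hcont ?_
        filter_upwards [Ico_mem_nhdsLT_of_mem ((⟨h', le_rfl⟩ : u₀ ∈ Ioc t₁ u₀))] with
          u hu
        exact hkey u hu.1 hu.2
  have hu₀C : u₀ ∈ C := ⟨⟨hu₀1, hu₀2⟩, hxle⟩
  have hsub : Icc t₁ u₀ ⊆ Icc (0:ℝ) T := fun τ hτ =>
    ⟨le_trans ht₁.1 hτ.1, le_trans hτ.2 hu₀2⟩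
  have hvneg : ∀ τ ∈ Icc t₁ u₀, v τ ≤ -(43/100) := by
    apply stay_neg hu₀1 (by norm_num)
    · exact fun τ hτ => ((O.sol τ (hsub hτ)).2).continuousAt.continuousWithinAt
    · intro τ hτ
      exact O.speed_low hα hβ hT τ (hsub hτ) (le_trans (hxle τ hτ) hx1)
    · exact hv1
  rcases eq_or_lt_of_le hu₀2 with hend | hend
  · -- u₀ = T : but x T = β > π - 1
    have hxT : x T ≤ x t₁ := by rw [← hend]; exact hxle u₀ ⟨hu₀1, le_rfl⟩
    rw [O.xT] at hxT
    have := beta_lb hβ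
    linarith
  · -- u₀ < T : x keeps decreasing just after u₀, contradicting sSup
    have hvu₀ : v u₀ < 0 := by
      have := hvneg u₀ ⟨hu₀1, le_rfl⟩; linarith
    have hev := eventually_lt_of_deriv_neg_right (O.sol u₀ hu₀Icc).1 hvu₀
    obtain ⟨u', hu', hsubset⟩ := mem_nhdsGT_iff_exists_Ioo_subset.1 hev
    set τ₀ := min ((u₀ + u')/2) ((u₀ + T)/2) with hτ₀
    have hu'0 : u₀ < u' := hu'
    have hτ₀1 : u₀ < τ₀ := lt_min (by linarith) (by linarith)
    have hτ₀2 : τ₀ ≤ T := le_trans (min_le_right _ _) (by linarith)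
    have hτ₀3 : τ₀ < u' := lt_of_le_of_lt (min_le_left _ _) (by linarith)
    have hτ₀C : τ₀ ∈ C := by
      refine ⟨⟨le_trans hu₀1 hτ₀1.le, hτ₀2⟩, ?_⟩
      intro τ hτ
      rcases le_or_gt τ u₀ with h | h
      · exact hxle τ ⟨hτ.1, h⟩
      · have hmem : τ ∈ Ioo u₀ u' := ⟨h, lt_of_le_of_lt hτ.2 hτ₀3⟩
        have := hsubset hmem
        simp only [mem_setOf_eq] at this
        exact le_trans this.le (hxle u₀ ⟨hu₀1, le_rfl⟩)
    have := le_csSup hCbdd hτ₀C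
    rw [← hu₀] at this
    linarith

/-- after time 7 the orbit stays in the region `x ≥ π - 6/5`. -/
lemma stay (hα : |α| ≤ 1) (hβ : |β - Real.pi| < 1) (hT : 10 ≤ T) (O : Orbit α β T x v) :
    ∀ t, 7 ≤ t → t ≤ T → Real.pi - 6/5 ≤ x t := by
  intro tb h7 htT
  by_contra hcon
  push_neg at hcon
  by_cases hcase : ∃ t' ∈ Icc (0:ℝ) tb, Real.pi - 6/5 < x t'
  · -- there was an earlier time above the level: find last crossing, then descend
    obtain ⟨t', ht', hxt'⟩ := hcase
    set S : Set ℝ := {u | u ∈ Icc (0:ℝ) tb ∧ Real.pi - 6/5 ≤ x u} with hS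
    have hSne : S.Nonempty := ⟨t', ht', hxt'.le⟩
    have hSbdd : BddAbove S := ⟨tb, fun u hu => hu.1.2⟩
    set t₁ := sSup S with ht₁
    have ht₁0 : 0 ≤ t₁ := le_trans ht'.1 (le_csSup hSbdd ⟨ht', hxt'.le⟩)
    have ht₁tb : t₁ ≤ tb := csSup_le hSne (fun u hu => hu.1.2)
    have ht₁T : t₁ ∈ Icc (0:ℝ) T := ⟨ht₁0, le_trans ht₁tb htT⟩
    have hxt₁ : Real.pi - 6/5 ≤ x t₁ := by
      by_contra hxc
      push_neg at hxc
      have hcont : ContinuousAt x t₁ := (O.sol t₁ ht₁T).1.continuousAt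
      have hev : ∀ᶠ u in nhds t₁, x u < Real.pi - 6/5 :=
        hcont.eventually_lt continuousAt_const hxc
      obtain ⟨ε, hε, hball⟩ := Metric.eventually_nhds_iff.1 hev
      obtain ⟨u, huS, hu⟩ := exists_lt_of_lt_csSup hSne
        (show t₁ - ε/2 < t₁ by linarith)
      have hut₁ : u ≤ t₁ := le_csSup hSbdd huS
      have : dist u t₁ < ε := by
        rw [Real.dist_eq, abs_lt]; constructor <;> linarith
      have := hball this
      linarith [huS.2]
    have ht₁ne : t₁ < tb := by
      rcases eq_or_lt_of_le ht₁tb with h | h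
      · exfalso; rw [h] at hxt₁; linarith
      · exact h
    have hafter : ∀ u, t₁ < u → u ≤ tb → x u < Real.pi - 6/5 := by
      intro u h1 h2
      by_contra hc
      push_neg at hc
      have : u ∈ S := ⟨⟨le_trans ht₁0 h1.le, h2⟩, hc⟩
      have := le_csSup hSbdd this
      linarith
    have hxt₁le : x t₁ ≤ Real.pi - 6/5 := by
      have hcont : ContinuousWithinAt x (Ioi t₁) t₁ :=
        ((O.sol t₁ ht₁T).1.continuousAt).continuousWithinAt
      refine le_of_tendsto hcont ?_
      filter_upwards [Ioc_mem_nhdsGT_of_mem (⟨le_rfl, ht₁ne⟩ : t₁ ∈ Ico t₁ tb)] with u hu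
      exact (hafter u hu.1 hu.2).le
    have hvt₁ : v t₁ ≤ 0 := by
      apply deriv_nonpos_of_right (O.sol t₁ ht₁T).1
      filter_upwards [Ioc_mem_nhdsGT_of_mem (⟨le_rfl, ht₁ne⟩ : t₁ ∈ Ico t₁ tb)] with u hu
      exact le_trans (hafter u hu.1 hu.2).le hxt₁
    exact O.descent hα hβ hT ht₁T hxt₁le hvt₁
  · -- the orbit stayed below the level the whole time : it must have travelled up fast
    push_neg at hcase
    have hsub : Icc (0:ℝ) tb ⊆ Icc (0:ℝ) T := Icc_subset_Icc le_rfl htT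
    have hne : ∀ t ∈ Icc (0:ℝ) tb, (43/100:ℝ) ≤ |v t| := fun t ht =>
      O.speed_low hα hβ hT t (hsub ht) (hcase t ht)
    have hvc : ContinuousOn v (Icc (0:ℝ) tb) :=
      fun t ht => ((O.sol t (hsub ht)).2).continuousAt.continuousWithinAt
    have hpos := stay_pos (by linarith : (0:ℝ) ≤ tb) (by norm_num) hvc hne (O.v0_nonneg hT)
    have hmono : MonotoneOn (fun t => x t - (43/100) * t) (Icc (0:ℝ) tb) := by
      apply mono_from_deriv (f' := fun t => v t - 43/100)
      · intro t ht
        exact ((O.sol t (hsub ht)).1.sub ((hasDerivAt_id t).const_mul (43/100))).congr_deriv (by ring)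
      · intro t ht
        have := hpos t (Ioo_subset_Icc_self ht)
        linarith
    have h10 := hmono ⟨le_rfl, by linarith⟩ ⟨by linarith, le_rfl⟩ (by linarith)
    simp only [O.x0] at h10
    have hαl := alpha_lb hα
    have hpi : Real.pi < 3.15 := by linarith [Real.pi_lt_d2]
    -- x tb ≥ α + 0.43 * tb ≥ -1 + 3.01 = 2.01 > π - 6/5
    have : x tb ≥ α + (43/100) * tb := by linarith
    nlinarith

end Orbit

/-! ### Two-orbit comparison -/

lemma sq_le_of_sq_le {a b : ℝ} (ha : 0 ≤ a) (hb : 0 ≤ b) (h : a^2 ≤ b^2) : a ≤ b := by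
  nlinarith

set_option maxHeartbeats 8000000 in
lemma key_estimate {α β T s : ℝ} {x1 v1 x2 v2 : ℝ → ℝ}
    (hα : |α| ≤ 1) (hβ : |β - Real.pi| < 1)
    (hT : 10^8 ≤ T) (hs : T < s)
    (O1 : Orbit α β T x1 v1) (O2 : Orbit α β s x2 v2) :
    |v2 0 - v1 0| ≤ Real.exp (-(1/4) * T) * (s - T) := by
  have hT10 : (10:ℝ) ≤ T := by norm_num at hT; linarith
  have hs10 : (10:ℝ) ≤ s := by linarith
  have hsub21 : Icc (0:ℝ) T ⊆ Icc (0:ℝ) s := Icc_subset_Icc le_rfl (by linarith)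
  set δ := |v2 0 - v1 0| with hδ
  set w : ℝ → ℝ := fun t => x2 t - x1 t with hwdef
  set z : ℝ → ℝ := fun t => v2 t - v1 t with hzdef
  clear_value δ w z
  have hδ0 : 0 ≤ δ := hδ ▸ abs_nonneg _
  have hwt : ∀ u, w u = x2 u - x1 u := fun u => by rw [hwdef]
  have hzt : ∀ u, z u = v2 u - v1 u := fun u => by rw [hzdef]
  -- derivatives of the difference
  have hw : ∀ t ∈ Icc (0:ℝ) T, HasDerivAt w (z t) t := by
    intro t ht
    rw [hwdef, hzdef]
    exact ((O2.sol t (hsub21 ht)).1.sub (O1.sol t ht).1)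
  have hz : ∀ t ∈ Icc (0:ℝ) T,
      HasDerivAt z (-(Real.sin (x2 t) - Real.sin (x1 t))) t := by
    intro t ht
    rw [hzdef]
    have h := ((O2.sol t (hsub21 ht)).2.sub (O1.sol t ht).2)
    refine h.congr_deriv ?_
    ring
  -- energies
  set e1 := v1 0^2/2 - Real.cos α with he1
  set e2 := v2 0^2/2 - Real.cos α with he2
  clear_value e1 e2
  have E1 : ∀ t ∈ Icc (0:ℝ) T, v1 t ^2/2 - Real.cos (x1 t) = e1 := by
    simp only [he1]; exact O1.energy hT10
  have E2 : ∀ t ∈ Icc (0:ℝ) s, v2 t ^2/2 - Real.cos (x2 t) = e2 := by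
    simp only [he2]; exact O2.energy hs10
  set d := e2 - e1 with hd
  clear_value d
  have hv10 : (7/5:ℝ) ≤ v1 0 := O1.v0_lb hα hβ hT10
  have hv20 : (7/5:ℝ) ≤ v2 0 := O2.v0_lb hα hβ hs10
  have hd1 : (7/5) * δ ≤ |d| := by
    have hdval : d = ((v2 0 + v1 0)/2) * (v2 0 - v1 0) := by
      rw [hd, he1, he2]; ring
    rw [hdval, abs_mul, hδ]
    have h1 : (7/5:ℝ) ≤ |(v2 0 + v1 0)/2| := by
      rw [abs_of_pos (by linarith)]
      linarith
    exact mul_le_mul h1 le_rfl (abs_nonneg _) (abs_nonneg _)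
  -- uniform lower bound on the phase-difference norm (conserved-energy transversality)
  have hlow : ∀ t ∈ Icc (0:ℝ) T, (19/100)*δ^2 ≤ (w t)^2 + (z t)^2 := by
    intro t ht
    have h1 := E1 t ht
    have h2 := E2 t (hsub21 ht)
    have hsp1 := O1.speed_abs hα hβ hT10 t ht
    have hsp2 := O2.speed_abs hα hβ hs10 t (hsub21 ht)
    have hcd : |Real.cos (x2 t) - Real.cos (x1 t)| ≤ |w t| := by
      rw [hwt t]; exact _root_.abs_cos_sub_cos_le _ _
    have hdd : d = ((v2 t + v1 t)/2) * (z t) - (Real.cos (x2 t) - Real.cos (x1 t)) := by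
      rw [hd, ← h1, ← h2, hzt t]; ring
    have habs : |d| ≤ (9/4)*|z t| + |w t| := by
      rw [hdd]
      refine le_trans (abs_sub _ _) ?_
      gcongr
      rw [abs_mul]
      have : |(v2 t + v1 t)/2| ≤ 9/4 := by
        rw [abs_div]
        have := abs_add_le (v2 t) (v1 t)
        have : |v2 t + v1 t| ≤ 9/2 := by linarith [abs_add_le (v2 t) (v1 t)]
        rw [abs_two]
        linarith
      exact mul_le_mul_of_nonneg_right this (abs_nonneg _)
    have hsum : (28/45)*δ ≤ |z t| + |w t| := by
      have : (7/5)*δ ≤ (9/4)*|z t| + |w t| := le_trans hd1 habs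
      have hwnn := abs_nonneg (w t)
      have hznn := abs_nonneg (z t)
      linarith
    have haux : (28/45*δ)*(28/45*δ) ≤ (|z t| + |w t|)*(|z t| + |w t|) :=
      mul_self_le_mul_self (by positivity) hsum
    rw [← sq_abs (w t), ← sq_abs (z t)]
    nlinarith [haux, sq_nonneg (|z t| - |w t|)]
  -- Gronwall bound on [0,7]
  have hanti : AntitoneOn (fun t => ((w t)^2 + (z t)^2) * Real.exp (-(2:ℝ)*t))
      (Icc (0:ℝ) 7) := by
    have hsub7 : Icc (0:ℝ) 7 ⊆ Icc (0:ℝ) T := Icc_subset_Icc le_rfl (by linarith)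
    apply anti_from_deriv (f' := fun t =>
      (2*(w t)*(z t) + 2*(z t)*(-(Real.sin (x2 t) - Real.sin (x1 t)))) * Real.exp (-(2:ℝ)*t)
      + ((w t)^2 + (z t)^2) * (Real.exp (-(2:ℝ)*t) * (-2)))
    · intro t ht
      have h1 : HasDerivAt (fun u => (w u)^2 + (z u)^2)
          (2*(w t)*(z t) + 2*(z t)*(-(Real.sin (x2 t) - Real.sin (x1 t)))) t := by
        have ha := ((hw t (hsub7 ht)).pow 2).add ((hz t (hsub7 ht)).pow 2)
        refine ha.congr_deriv ?_
        push_cast; ring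
      have hlin : HasDerivAt (fun u : ℝ => -(2:ℝ)*u) (-2) t := by
        simpa using (hasDerivAt_id t).const_mul (-2:ℝ)
      exact h1.mul hlin.exp
    · intro t ht
      have hts : t ∈ Icc (0:ℝ) T := ⟨ht.1.le, by linarith [ht.2]⟩
      have hsin : |Real.sin (x2 t) - Real.sin (x1 t)| ≤ |w t| := by
        rw [hwt t]; exact _root_.abs_sin_sub_sin_le _ _
      have hE := Real.exp_pos (-(2:ℝ)*t)
      have hkey : 2*(w t)*(z t) + 2*(z t)*(-(Real.sin (x2 t) - Real.sin (x1 t)))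
          ≤ 2*((w t)^2 + (z t)^2) := by
        have h1 : (z t)*(-(Real.sin (x2 t) - Real.sin (x1 t))) ≤ |z t| * |w t| := by
          calc (z t)*(-(Real.sin (x2 t) - Real.sin (x1 t)))
              ≤ |(z t)*(-(Real.sin (x2 t) - Real.sin (x1 t)))| := le_abs_self _
            _ = |z t| * |Real.sin (x2 t) - Real.sin (x1 t)| := by rw [abs_mul, abs_neg]
            _ ≤ |z t| * |w t| := mul_le_mul_of_nonneg_left hsin (abs_nonneg _)
        have h2 : (w t)*(z t) ≤ |w t| * |z t| := by
          calc (w t)*(z t) ≤ |(w t)*(z t)| := le_abs_self _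
            _ = |w t| * |z t| := abs_mul _ _
        nlinarith [sq_nonneg (|w t| - |z t|), sq_abs (w t), sq_abs (z t)]
      have hmul := mul_le_mul_of_nonneg_right hkey hE.le
      nlinarith [hmul]
  have hinit : w 0 = 0 := by
    rw [hwt 0, O1.x0, O2.x0, sub_self]
  have hz0 : (z 0)^2 = δ^2 := by
    rw [hzt 0, hδ]; exact (sq_abs _).symm
  have hexp14 : Real.exp (14:ℝ) ≤ 1300000 := by
    have h1 : Real.exp (14:ℝ) = (Real.exp 1)^(14:ℕ) := by
      rw [← Real.exp_nat_mul]; norm_num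
    rw [h1]
    have h2 : (Real.exp 1)^(14:ℕ) ≤ (2.7182818286:ℝ)^(14:ℕ) :=
      pow_le_pow_left₀ (Real.exp_pos 1).le Real.exp_one_lt_d9.le 14
    refine le_trans h2 ?_
    norm_num
  have hR7 : (w 7)^2 + (z 7)^2 ≤ 1300000 * δ^2 := by
    have h := hanti ⟨le_rfl, by norm_num⟩ (⟨by norm_num, le_rfl⟩ : (7:ℝ) ∈ Icc (0:ℝ) 7)
      (by norm_num)
    simp only [hinit] at h
    rw [hz0] at h
    rw [show ((-2:ℝ))*7 = -14 by norm_num, show ((-2:ℝ))*0 = 0 by norm_num,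
      Real.exp_zero, mul_one, Real.exp_neg] at h
    have hEpos : (0:ℝ) < Real.exp 14 := Real.exp_pos _
    have h' := mul_le_mul_of_nonneg_right h hEpos.le
    rw [mul_assoc, inv_mul_cancel₀ hEpos.ne', mul_one] at h'
    nlinarith [mul_le_mul_of_nonneg_left hexp14 (sq_nonneg δ)]
  -- region confinement after time 7
  have hreg1 : ∀ t, 7 ≤ t → t ≤ T →
      x1 t ∈ Icc (Real.pi - 6/5) (Real.pi + 6/5) := by
    intro t h7 htT
    refine ⟨O1.stay hα hβ hT10 t h7 htT, ?_⟩
    have := O1.x_ub hβ t ⟨by linarith, htT⟩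
    linarith
  have hreg2 : ∀ t, 7 ≤ t → t ≤ T →
      x2 t ∈ Icc (Real.pi - 6/5) (Real.pi + 6/5) := by
    intro t h7 htT
    refine ⟨O2.stay hα hβ hs10 t h7 (by linarith), ?_⟩
    have := O2.x_ub hβ t ⟨by linarith, by linarith⟩
    linarith
  -- derivative of P = w * z on [7, T]
  have hsub7T : Icc (7:ℝ) T ⊆ Icc (0:ℝ) T := Icc_subset_Icc (by norm_num) le_rfl
  have hP : ∀ t ∈ Icc (7:ℝ) T, HasDerivAt (fun u => w u * z u)
      (z t * z t + w t * (-(Real.sin (x2 t) - Real.sin (x1 t)))) t :=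
    fun t ht => (hw t (hsub7T ht)).mul (hz t (hsub7T ht))
  -- key differential inequalities on [7, T]
  have hPgrow : ∀ t ∈ Icc (7:ℝ) T,
      (1/20)*δ^2 ≤ z t * z t + w t * (-(Real.sin (x2 t) - Real.sin (x1 t))) ∧
      (26/25) * (w t * z t) ≤ z t * z t + w t * (-(Real.sin (x2 t) - Real.sin (x1 t))) := by
    intro t ht
    have hsin := sin_region_decay (hreg2 t ht.1 ht.2) (hreg1 t ht.1 ht.2)
    -- (sin x2 - sin x1)(x2 - x1) ≤ -(7/25)(x2-x1)^2
    have hwk : w t * (-(Real.sin (x2 t) - Real.sin (x1 t))) ≥ (7/25) * (w t)^2 := by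
      have h' : (Real.sin (x2 t) - Real.sin (x1 t)) * (x2 t - x1 t)
          ≤ -(7/25) * (x2 t - x1 t)^2 := hsin
      rw [hwt t]
      nlinarith [h']
    have hl := hlow t (hsub7T ht)
    constructor
    · nlinarith [hwk, hl]
    · nlinarith [hwk, sq_nonneg (z t - (13/25) * w t)]
  -- Phase 1 : linear growth of P
  set B : ℝ := 3*10^7 with hB
  clear_value B
  have h7B : (7:ℝ) ≤ B := by rw [hB]; norm_num
  have hBT : B ≤ T := by rw [hB]; norm_num at hT ⊢; linarith
  have hmono1 : MonotoneOn (fun t => w t * z t - (1/20)*δ^2*t) (Icc (7:ℝ) T) := by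
    apply mono_from_deriv (f' := fun t =>
      (z t * z t + w t * (-(Real.sin (x2 t) - Real.sin (x1 t)))) - (1/20)*δ^2)
    · intro t ht
      exact (hP t ht).sub (by simpa using (hasDerivAt_id t).const_mul ((1/20)*δ^2))
    · intro t ht
      have := (hPgrow t (Ioo_subset_Icc_self ht)).1
      linarith
  have hP7 : -(650000:ℝ)*δ^2 ≤ w 7 * z 7 := by nlinarith [sq_nonneg (w 7 + z 7), hR7]
  have hPB : (1/20)*δ^2 ≤ w B * z B := by
    have h := hmono1 (⟨le_rfl, by linarith⟩ : (7:ℝ) ∈ Icc (7:ℝ) T) ⟨h7B, hBT⟩ h7B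
    simp only at h
    have hD0 : 0 ≤ δ^2 := sq_nonneg δ
    rw [hB] at h ⊢
    nlinarith [h, hP7]
  -- Phase 2 : exponential growth of P
  have hmono2 : MonotoneOn (fun t => (w t * z t) * Real.exp (-(26/25)*t)) (Icc (7:ℝ) T) := by
    apply mono_from_deriv (f' := fun t =>
      (z t * z t + w t * (-(Real.sin (x2 t) - Real.sin (x1 t)))) * Real.exp (-(26/25)*t)
      + (w t * z t) * (Real.exp (-(26/25)*t) * (-(26/25))))
    · intro t ht
      have hlin : HasDerivAt (fun u : ℝ => -(26/25)*u) (-(26/25)) t := by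
        simpa using (hasDerivAt_id t).const_mul (-(26/25) : ℝ)
      exact (hP t ht).mul hlin.exp
    · intro t ht
      have h2 := (hPgrow t (Ioo_subset_Icc_self ht)).2
      have hE := Real.exp_pos (-(26/25)*t)
      nlinarith [mul_le_mul_of_nonneg_right h2 hE.le]
  have hPt : ∀ t ∈ Icc B T, (1/20)*δ^2 * Real.exp ((26/25)*(t-B)) ≤ w t * z t := by
    intro t ht
    have h := hmono2 ⟨h7B, hBT⟩ ⟨le_trans h7B ht.1, ht.2⟩ ht.1
    simp only at h
    have h1 : (1/20)*δ^2 * Real.exp (-(26/25)*B) ≤ w t * z t * Real.exp (-(26/25)*t) :=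
      le_trans (mul_le_mul_of_nonneg_right hPB (Real.exp_pos _).le) h
    have h2 := mul_le_mul_of_nonneg_right h1 (Real.exp_pos ((26/25)*t)).le
    have ee1 : Real.exp (-(26/25)*B) * Real.exp ((26/25)*t) = Real.exp ((26/25)*(t-B)) := by
      rw [← Real.exp_add]; congr 1; ring
    have ee2 : Real.exp (-(26/25)*t) * Real.exp ((26/25)*t) = 1 := by
      rw [← Real.exp_add]; norm_num
    rw [mul_assoc ((1/20)*δ^2), mul_assoc (w t * z t), ee1, ee2, mul_one] at h2
    exact h2
  -- Phase 3 : integrate to get w(T) large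
  have hmono3 : MonotoneOn (fun t => (w t)^2 - (5/52)*δ^2*Real.exp ((26/25)*(t-B)))
      (Icc B T) := by
    apply mono_from_deriv (f' := fun t =>
      2 * w t * z t - (5/52)*δ^2*(Real.exp ((26/25)*(t-B)) * (26/25)))
    · intro t ht
      have htT : t ∈ Icc (0:ℝ) T := ⟨by norm_num at ht ⊢; linarith [ht.1], ht.2⟩
      have hsq : HasDerivAt (fun u => (w u)^2) (2 * w t * z t) t := by
        have := (hw t htT).pow 2
        refine this.congr_deriv ?_
        push_cast; ring
      have hexp : HasDerivAt (fun u : ℝ => Real.exp ((26/25)*(u - B)))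
          (Real.exp ((26/25)*(t-B)) * (26/25)) t := by
        have hlin : HasDerivAt (fun u : ℝ => (26/25)*(u - B)) (26/25) t := by
          simpa using ((hasDerivAt_id t).sub_const B).const_mul ((26/25) : ℝ)
        exact hlin.exp
      exact hsq.sub (hexp.const_mul ((5/52)*δ^2))
    · intro t ht
      have := hPt t (Ioo_subset_Icc_self ht)
      nlinarith [this]
  have hwT : (5/52)*δ^2*(Real.exp ((26/25)*(T-B)) - 1) ≤ (w T)^2 := by
    have h := hmono3 (⟨le_rfl, hBT⟩ : B ∈ Icc B T) ⟨hBT, le_rfl⟩ hBT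
    simp only at h
    have hBB : (26/25)*(B - B) = 0 := by ring
    rw [hBB, Real.exp_zero] at h
    nlinarith [sq_nonneg (w B), h]
  -- w(T) is small : x2 hits β at time s close to T
  have hspeed2 : ∀ t ∈ Icc T s, |v2 t| ≤ 9/4 := fun t ht =>
    O2.speed_abs hα hβ hs10 t ⟨by linarith [ht.1], ht.2⟩
  have hm1 : MonotoneOn (fun t => x2 t + (9/4)*t) (Icc T s) := by
    apply mono_from_deriv (f' := fun t => v2 t + 9/4)
    · intro t ht
      exact ((O2.sol t ⟨by linarith [ht.1], ht.2⟩).1).add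
        (by simpa using (hasDerivAt_id t).const_mul ((9/4):ℝ))
    · intro t ht
      have := hspeed2 t (Ioo_subset_Icc_self ht)
      have := abs_le.1 this
      linarith [this.1]
  have hm2 : MonotoneOn (fun t => (9/4)*t - x2 t) (Icc T s) := by
    apply mono_from_deriv (f' := fun t => 9/4 - v2 t)
    · intro t ht
      exact (by simpa using (hasDerivAt_id t).const_mul ((9/4):ℝ) :
        HasDerivAt (fun u : ℝ => (9/4)*u) (9/4) t).sub
        ((O2.sol t ⟨by linarith [ht.1], ht.2⟩).1)
    · intro t ht
      have := hspeed2 t (Ioo_subset_Icc_self ht)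
      have := abs_le.1 this
      linarith [this.2]
  have hwTs : |w T| ≤ (9/4)*(s - T) := by
    have hTs : T ∈ Icc T s := ⟨le_rfl, hs.le⟩
    have hss : s ∈ Icc T s := ⟨hs.le, le_rfl⟩
    have h1 := hm1 hTs hss hs.le
    have h2 := hm2 hTs hss hs.le
    simp only at h1 h2
    have hx2s : x2 s = β := O2.xT
    have hx1T : x1 T = β := O1.xT
    have hwT' : w T = x2 T - β := by rw [hwt T, hx1T]
    rw [hwT', abs_le]
    constructor
    · rw [← hx2s]; linarith
    · rw [← hx2s]; linarith
  -- put everything together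
  have hY : (26/25)*(T-B) ≥ 7*10^7 := by
    rw [hB]; norm_num at hT ⊢; linarith
  have hexpY : (2:ℝ) ≤ Real.exp ((26/25)*(T-B)) := by
    have := Real.add_one_le_exp ((26/25)*(T-B))
    linarith
  have hfinal : δ^2 * Real.exp ((26/25)*(T-B)) ≤ (1053/10)*(s-T)^2 := by
    have hsq : (w T)^2 ≤ (81/16)*(s-T)^2 := by
      have := mul_self_le_mul_self (abs_nonneg (w T)) hwTs
      rw [← sq_abs (w T)]
      nlinarith [this]
    nlinarith [hwT, hsq, hexpY, sq_nonneg δ]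
  -- convert to the exponential bound
  have hexpYpos := Real.exp_pos ((26/25)*(T-B))
  have hδsq : δ^2 ≤ 121 * (Real.exp (-(13/25)*(T-B)))^2 * (s-T)^2 := by
    have he : (Real.exp (-(13/25)*(T-B)))^2 = (Real.exp ((26/25)*(T-B)))⁻¹ := by
      rw [← Real.exp_neg, ← Real.exp_nat_mul]
      congr 1; push_cast; ring
    rw [he]
    have hid : δ^2 = δ^2 * Real.exp ((26/25)*(T-B)) * (Real.exp ((26/25)*(T-B)))⁻¹ := by
      field_simp
    rw [hid]
    calc δ^2 * Real.exp ((26/25)*(T-B)) * (Real.exp ((26/25)*(T-B)))⁻¹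
        ≤ (1053/10)*(s-T)^2 * (Real.exp ((26/25)*(T-B)))⁻¹ :=
          mul_le_mul_of_nonneg_right hfinal (inv_nonneg.2 hexpYpos.le)
      _ ≤ 121 * (Real.exp ((26/25)*(T-B)))⁻¹ * (s-T)^2 := by
          nlinarith [mul_nonneg (inv_nonneg.2 hexpYpos.le) (sq_nonneg (s-T))]
  have hstep : δ ≤ 11 * Real.exp (-(13/25)*(T-B)) * (s-T) := by
    apply sq_le_of_sq_le hδ0
    · exact mul_nonneg (mul_nonneg (by norm_num) (Real.exp_pos _).le) (by linarith)
    · calc δ^2 ≤ 121 * (Real.exp (-(13/25)*(T-B)))^2 * (s-T)^2 := hδsq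
        _ = (11 * Real.exp (-(13/25)*(T-B)) * (s-T))^2 := by ring
  -- finally compare the exponentials
  have hcmp : 11 * Real.exp (-(13/25)*(T-B)) ≤ Real.exp (-(1/4)*T) := by
    set Z := (13/25)*(T-B) - (1/4)*T with hZ
    have hZ10 : (10:ℝ) ≤ Z := by
      rw [hZ, hB]; norm_num at hT ⊢; linarith
    have h11 : (11:ℝ) ≤ Real.exp Z := by
      have := Real.add_one_le_exp Z
      linarith
    calc 11 * Real.exp (-(13/25)*(T-B))
        ≤ Real.exp Z * Real.exp (-(13/25)*(T-B)) :=
          mul_le_mul_of_nonneg_right h11 (Real.exp_pos _).le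
      _ = Real.exp (Z + -(13/25)*(T-B)) := (Real.exp_add _ _).symm
      _ = Real.exp (-(1/4)*T) := by rw [hZ]; ring_nf
  calc δ ≤ 11 * Real.exp (-(13/25)*(T-B)) * (s-T) := hstep
    _ ≤ Real.exp (-(1/4)*T) * (s-T) := by
        apply mul_le_mul_of_nonneg_right hcmp (by linarith)

/-- `IsPendSolOn x v s` : on the set `s`, `x` solves the pendulum equation
`ẍ + sin x = 0`, with velocity `v`. -/
def IsPendSolOn (x v : ℝ → ℝ) (s : Set ℝ) : Prop :=
  ∀ t ∈ s, HasDerivAt x (v t) t ∧ HasDerivAt v (-Real.sin (x t)) t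

/-- **Exponential smallness of `∂_T ẋ(0; T, α, β)` in the non-winding case.**
There are `c > 0` and `T₀ > 0` such that for `|α| ≤ 1`, `|β − π| < 1`, if for
each `T > 0` the function `x T` (with velocity `v T`) is the unique
Pendulum-Lemma solution of `ẍ + sin x = 0` with `x(0) = α`, `x(T) = β`,
confined to `[α, max(β, π)]`, then for all `T ≥ T₀` the derivative of the
initial velocity with respect to `T` satisfies `|∂_T ẋ(0; T, α, β)| ≤ e^{−cT}`. -/
theorem exp_decay_initial_velocity :
    ∃ c > (0:ℝ), ∃ T₀ > (0:ℝ), ∀ α β : ℝ, |α| ≤ 1 → |β - Real.pi| < 1 →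
      ∀ x v : ℝ → ℝ → ℝ,
      (∀ T, 0 < T →
        IsPendSolOn (x T) (v T) (Set.Icc 0 T) ∧ x T 0 = α ∧ x T T = β ∧
        ∀ t ∈ Set.Icc 0 T, α ≤ x T t ∧ x T t ≤ max β Real.pi) →
      ∀ T, T₀ ≤ T → |deriv (fun s => v s 0) T| ≤ Real.exp (-c * T) := by
  refine ⟨1/4, by norm_num, 10^8, by norm_num, ?_⟩
  intro α β hα hβ x v hsys T hT
  by_cases hdiff : DifferentiableAt ℝ (fun s => v s 0) T
  · have hT0 : (0:ℝ) < T := by norm_num at hT ⊢; linarith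
    have hD := hdiff.hasDerivAt
    have hDW : HasDerivWithinAt (fun s => v s 0) (deriv (fun s => v s 0) T)
        (Set.Ioi T) T := hD.hasDerivWithinAt
    rw [hasDerivWithinAt_iff_tendsto_slope' (by simp : T ∉ Set.Ioi T)] at hDW
    have habs : Tendsto (fun y => |slope (fun s => v s 0) T y|)
        (nhdsWithin T (Set.Ioi T)) (nhds |deriv (fun s => v s 0) T|) := hDW.abs
    refine le_of_tendsto habs ?_
    filter_upwards [self_mem_nhdsWithin] with y hy
    have hTy : T < y := hy
    obtain ⟨hsol1, hx01, hxT1, hconf1⟩ := hsys T hT0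
    obtain ⟨hsol2, hx02, hxT2, hconf2⟩ := hsys y (by linarith)
    have O1 : Orbit α β T (x T) (v T) := ⟨hsol1, hx01, hxT1, hconf1⟩
    have O2 : Orbit α β y (x y) (v y) := ⟨hsol2, hx02, hxT2, hconf2⟩
    have hk := key_estimate hα hβ hT hTy O1 O2
    simp only [slope_def_field]
    rw [abs_div, abs_of_pos (by linarith : (0:ℝ) < y - T), div_le_iff₀ (by linarith)]
    convert hk using 2
  · rw [deriv_zero_of_not_differentiableAt hdiff]
    rw [abs_zero]
    exact (Real.exp_pos _).le
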